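/- Let θ₃(t, q) = ∑_{n∈ℤ} q^{n²} cos(2nt). Then lim_{σ→∞} σ√π · θ₃(π/2, e^{−1/(4σ²)}) / (θ₃(π/2, e^{−1/(2σ²)}))² = 1/2 and lim_{σ→∞} σ√π · θ₃(0, e^{−1/(4σ²)}) / (θ₃(0, e^{−1/(2σ²)}))² = 1. Equivalently, the lower Riesz constant Ã_G(σ) of the system of integer shifts of the Gaussian nod function tends to 1/2, and the upper Riesz constant B̃_G(σ) tends to 1, as σ → ∞. -/

import Mathlib

open Real Filter

/-- The third Jacobi theta function `θ₃(t, q) = ∑_{n∈ℤ} q^{n²} cos(2nt)`. -/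
noncomputable def theta3 (t q : ℝ) : ℝ :=
  ∑' n : ℤ, q ^ ((n : ℝ) ^ 2) * Real.cos (2 * n * t)

namespace GaussNodAux

/-- `E a = ∑_{n ≥ 1} e^{-a n²}` (indexed by `n+1`, `n : ℕ`). -/
noncomputable def E (a : ℝ) : ℝ := ∑' n : ℕ, Real.exp (-(a * ((n : ℝ) + 1) ^ 2))

/-- `S a = ∑_{n ∈ ℤ} e^{-a n²}`. -/
noncomputable def S (a : ℝ) : ℝ := ∑' n : ℤ, Real.exp (-(a * (n : ℝ) ^ 2))

lemma summable_nat {a : ℝ} (ha : 0 < a) :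
    Summable fun n : ℕ => Real.exp (-(a * (n : ℝ) ^ 2)) := by
  refine Summable.of_nonneg_of_le (fun n => (Real.exp_pos _).le) (fun n => ?_)
    (summable_geometric_of_lt_one (Real.exp_pos (-a)).le
      (Real.exp_lt_one_iff.mpr (by linarith)))
  rw [← Real.exp_nat_mul]
  apply Real.exp_le_exp.mpr
  have hn : (n : ℝ) ≤ (n : ℝ) ^ 2 := by
    exact_mod_cast Nat.le_self_pow two_ne_zero n
  nlinarith

lemma summable_E {a : ℝ} (ha : 0 < a) :
    Summable fun n : ℕ => Real.exp (-(a * ((n : ℝ) + 1) ^ 2)) := by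
  have h := (summable_nat_add_iff 1).mpr (summable_nat ha)
  refine h.congr fun n => ?_
  push_cast
  ring_nf

lemma hasSum_S {a : ℝ} (ha : 0 < a) :
    HasSum (fun n : ℤ => Real.exp (-(a * (n : ℝ) ^ 2))) (1 + 2 * E a) := by
  have h2 : HasSum (fun n : ℕ => Real.exp (-(a * ((n : ℝ) + 1) ^ 2))) (E a) :=
    (summable_E ha).hasSum
  have h2' : HasSum (fun n : ℕ => Real.exp (-(a * ((n + 1 : ℕ) : ℝ) ^ 2))) (E a) := by
    refine h2.congr_fun fun n => ?_
    push_cast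
    ring_nf
  have h1 : HasSum (fun n : ℕ => Real.exp (-(a * (n : ℝ) ^ 2)))
      (E a + ∑ i ∈ Finset.range 1, Real.exp (-(a * (i : ℝ) ^ 2))) :=
    (hasSum_nat_add_iff 1).mp h2'
  simp only [Finset.range_one, Finset.sum_singleton, Nat.cast_zero] at h1
  norm_num at h1
  have h3 := h1.int_rec h2
  have heq : (Int.rec (fun n : ℕ => Real.exp (-(a * (n : ℝ) ^ 2)))
      (fun n : ℕ => Real.exp (-(a * ((n : ℝ) + 1) ^ 2))) : ℤ → ℝ)
      = fun n : ℤ => Real.exp (-(a * (n : ℝ) ^ 2)) := by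
    funext n
    cases n with
    | ofNat m => simp
    | negSucc m =>
      show Real.exp (-(a * ((m : ℝ) + 1) ^ 2)) = _
      rw [Int.cast_negSucc]
      push_cast
      ring_nf
  rw [heq] at h3
  convert h3 using 1
  ring

lemma summable_S {a : ℝ} (ha : 0 < a) :
    Summable fun n : ℤ => Real.exp (-(a * (n : ℝ) ^ 2)) := (hasSum_S ha).summable

lemma S_eq {a : ℝ} (ha : 0 < a) : S a = 1 + 2 * E a := (hasSum_S ha).tsum_eq

/-- Poisson summation for the theta series. -/
lemma poisson {c : ℝ} (hc : 0 < c) : S c = Real.sqrt (π / c) * S (π ^ 2 / c) := by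
  have hπ := Real.pi_pos
  have hb : 0 < c / π := div_pos hc hπ
  have h := Real.tsum_exp_neg_mul_int_sq hb
  have e1 : ∀ n : ℤ, -π * (c / π) * (n : ℝ) ^ 2 = -(c * (n : ℝ) ^ 2) := by
    intro n
    have h0 : -π * (c / π) = -c := by field_simp
    rw [h0, neg_mul]
  have e2 : ∀ n : ℤ, -π / (c / π) * (n : ℝ) ^ 2 = -(π ^ 2 / c * (n : ℝ) ^ 2) := by
    intro n
    have h0 : -π / (c / π) = -(π ^ 2 / c) := by
      rw [div_div_eq_mul_div]
      ring
    rw [h0, neg_mul]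
  simp_rw [e1, e2] at h
  rw [S, S, h]
  congr 1
  rw [show π / c = (c / π)⁻¹ by rw [inv_div], Real.sqrt_inv, ← Real.sqrt_eq_rpow, one_div]

lemma E_lower {a : ℝ} (ha : 0 < a) : Real.exp (-a) ≤ E a := by
  have h := Summable.le_tsum (summable_E ha) 0 (fun n _ => (Real.exp_pos _).le)
  simpa [E] using h

lemma E_upper {a : ℝ} (ha : 0 < a) :
    E a ≤ Real.exp (-a) * (1 - Real.exp (-(3 * a)))⁻¹ := by
  have hr0 : (0 : ℝ) ≤ Real.exp (-(3 * a)) := (Real.exp_pos _).le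
  have hr1 : Real.exp (-(3 * a)) < 1 := Real.exp_lt_one_iff.mpr (by linarith)
  have hsg : Summable fun n : ℕ => Real.exp (-a) * Real.exp (-(3 * a)) ^ n :=
    (summable_geometric_of_lt_one hr0 hr1).mul_left _
  have hle : ∀ n : ℕ, Real.exp (-(a * ((n : ℝ) + 1) ^ 2))
      ≤ Real.exp (-a) * Real.exp (-(3 * a)) ^ n := by
    intro n
    rw [← Real.exp_nat_mul, ← Real.exp_add]
    apply Real.exp_le_exp.mpr
    have hn : (n : ℝ) ≤ (n : ℝ) ^ 2 := by
      exact_mod_cast Nat.le_self_pow two_ne_zero n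
    nlinarith
  calc E a ≤ ∑' n : ℕ, Real.exp (-a) * Real.exp (-(3 * a)) ^ n :=
        Summable.tsum_le_tsum hle (summable_E ha) hsg
    _ = Real.exp (-a) * (1 - Real.exp (-(3 * a)))⁻¹ := by
        rw [tsum_mul_left, tsum_geometric_of_lt_one hr0 hr1]

lemma tendsto_exp_neg_mul (k : ℝ) (hk : 0 < k) :
    Tendsto (fun a : ℝ => Real.exp (-(k * a))) atTop (nhds 0) := by
  have h1 : Tendsto (fun a : ℝ => -(k * a)) atTop atBot := by
    apply tendsto_neg_atBot_iff.mpr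
    exact tendsto_id.const_mul_atTop hk
  exact Real.tendsto_exp_atBot.comp h1

/-- `exp a * E a → 1` as `a → ∞`. -/
lemma tendsto_g : Tendsto (fun a : ℝ => Real.exp a * E a) atTop (nhds 1) := by
  have hupper : Tendsto (fun a : ℝ => (1 - Real.exp (-(3 * a)))⁻¹) atTop (nhds 1) := by
    have h := (tendsto_const_nhds (x := (1 : ℝ)) (f := atTop)).sub
      (tendsto_exp_neg_mul 3 (by norm_num))
    rw [sub_zero] at h
    simpa using h.inv₀ one_ne_zero
  refine tendsto_of_tendsto_of_tendsto_of_le_of_le' tendsto_const_nhds hupper ?_ ?_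
  · filter_upwards [eventually_gt_atTop 0] with a ha
    have h := E_lower ha
    calc (1 : ℝ) = Real.exp a * Real.exp (-a) := by rw [← Real.exp_add]; simp
      _ ≤ Real.exp a * E a := mul_le_mul_of_nonneg_left h (Real.exp_pos a).le
  · filter_upwards [eventually_gt_atTop 0] with a ha
    have h := E_upper ha
    calc Real.exp a * E a
        ≤ Real.exp a * (Real.exp (-a) * (1 - Real.exp (-(3 * a)))⁻¹) :=
          mul_le_mul_of_nonneg_left h (Real.exp_pos a).le
      _ = (1 - Real.exp (-(3 * a)))⁻¹ := by rw [← mul_assoc, ← Real.exp_add]; simp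

lemma tendsto_E : Tendsto E atTop (nhds 0) := by
  have h := (tendsto_exp_neg_mul 1 one_pos).mul tendsto_g
  rw [zero_mul] at h
  refine h.congr fun a => ?_
  rw [one_mul, ← mul_assoc, ← Real.exp_add]
  simp

lemma tendsto_S : Tendsto S atTop (nhds 1) := by
  have h : Tendsto (fun a : ℝ => 1 + 2 * E a) atTop (nhds 1) := by
    have := (tendsto_const_nhds (x := (1 : ℝ)) (f := atTop)).add
      ((tendsto_const_nhds (x := (2 : ℝ))).mul tendsto_E)
    simpa using this
  refine h.congr' ?_
  filter_upwards [eventually_gt_atTop 0] with a ha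
  exact (S_eq ha).symm

lemma theta3_zero {c : ℝ} : theta3 0 (Real.exp (-c)) = S c := by
  unfold theta3 S
  congr 1
  funext n
  rw [mul_zero, Real.cos_zero, mul_one,
    Real.rpow_def_of_pos (Real.exp_pos _), Real.log_exp, neg_mul]

lemma theta3_pi_div_two {c : ℝ} (hc : 0 < c) :
    theta3 (π / 2) (Real.exp (-c)) = 2 * S (4 * c) - S c := by
  have hterm : ∀ n : ℤ, Real.exp (-c) ^ ((n : ℝ) ^ 2) * Real.cos (2 * n * (π / 2))
      = (-1 : ℝ) ^ n * Real.exp (-(c * (n : ℝ) ^ 2)) := by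
    intro n
    rw [Real.rpow_def_of_pos (Real.exp_pos _), Real.log_exp, neg_mul,
      show 2 * (n : ℝ) * (π / 2) = 0 + n * π by ring,
      Real.cos_add_int_mul_pi, Real.cos_zero, mul_one, mul_comm]
  unfold theta3
  simp_rw [hterm]
  set f : ℤ → ℝ := fun n => Real.exp (-(c * (n : ℝ) ^ 2)) with hf
  set idE : ℤ → ℝ := fun n => if Even n then f n else 0 with hidE
  have hsum_f : Summable f := summable_S hc
  have hsum_idE : Summable idE := by
    refine Summable.of_norm_bounded hsum_f fun n => ?_
    simp only [hidE]
    split_ifs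
    · rw [Real.norm_eq_abs, abs_of_pos (Real.exp_pos _)]
    · simpa using (Real.exp_pos _).le
  have h1 : ∀ n : ℤ, (-1 : ℝ) ^ n * f n = 2 * idE n - f n := by
    intro n
    rcases Int.even_or_odd n with he | ho
    · rw [he.neg_one_zpow]
      simp only [hidE, if_pos he]
      ring
    · rw [ho.neg_one_zpow]
      simp only [hidE, if_neg (Int.not_even_iff_odd.mpr ho)]
      ring
  have heven : ∑' n : ℤ, idE n = S (4 * c) := by
    have hinj : Function.Injective (fun m : ℤ => 2 * m) := by
      intro x y h
      dsimp at h
      omega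
    have hsupp : Function.support idE ⊆ Set.range (fun m : ℤ => 2 * m) := by
      intro n hn
      simp only [hidE, Function.mem_support] at hn
      by_cases he : Even n
      · obtain ⟨m, hm⟩ := he
        exact ⟨m, by dsimp; omega⟩
      · simp [he] at hn
    have h := hinj.tsum_eq (f := idE) hsupp
    rw [← h]
    unfold S
    congr 1
    funext m
    have he : Even (2 * m) := ⟨m, by ring⟩
    simp only [hidE, if_pos he, hf]
    push_cast
    ring_nf
  calc ∑' n : ℤ, (-1 : ℝ) ^ n * f n = ∑' n : ℤ, (2 * idE n - f n) := tsum_congr h1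
    _ = 2 * ∑' n : ℤ, idE n - ∑' n : ℤ, f n := by
        rw [Summable.tsum_sub (hsum_idE.mul_left 2) hsum_f, tsum_mul_left]
    _ = 2 * S (4 * c) - S c := by rw [heven]; rfl

/-- `S(1/(kσ²)) = σ √(kπ) S(k π² σ²)`. -/
lemma S_scaled {σ k : ℝ} (hσ : 0 < σ) (hk : 0 < k) :
    S (1 / (k * σ ^ 2)) = σ * Real.sqrt (k * π) * S (k * (π ^ 2 * σ ^ 2)) := by
  have hπ := Real.pi_pos
  have hc : 0 < 1 / (k * σ ^ 2) := by positivity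
  rw [poisson hc]
  rw [show π / (1 / (k * σ ^ 2)) = σ ^ 2 * (k * π) by field_simp,
    show π ^ 2 / (1 / (k * σ ^ 2)) = k * (π ^ 2 * σ ^ 2) by field_simp,
    Real.sqrt_mul (sq_nonneg σ), Real.sqrt_sq hσ.le]

/-- The pure algebra step for the lower Riesz constant. -/
lemma alg1 {σ p q u v w x : ℝ} (hσ : σ ≠ 0) (hp : p ^ 2 = π) (hq : q ^ 2 = 2 * π) :
    (u - v) / (2 * (w - x) ^ 2)
      = σ * p * (2 * (σ * p * (1 + 2 * u)) - σ * (2 * p) * (1 + 2 * v)) /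
        (2 * (σ * (q / 2) * (1 + 2 * w)) - σ * q * (1 + 2 * x)) ^ 2 := by
  have hπ := Real.pi_pos
  have hA : σ * p * (2 * (σ * p * (1 + 2 * u)) - σ * (2 * p) * (1 + 2 * v))
      = (σ ^ 2 * π * 4) * (u - v) := by
    linear_combination (4 * σ ^ 2 * (u - v)) * hp
  have hB : (2 * (σ * (q / 2) * (1 + 2 * w)) - σ * q * (1 + 2 * x)) ^ 2
      = (σ ^ 2 * π * 4) * (2 * (w - x) ^ 2) := by
    linear_combination (4 * σ ^ 2 * (w - x) ^ 2) * hq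
  rw [hA, hB, mul_div_mul_left _ _ ?_]
  exact mul_ne_zero (mul_ne_zero (pow_ne_zero 2 hσ) hπ.ne') (by norm_num)

end GaussNodAux

open GaussNodAux in
/-- As `σ → ∞`, `σ√π·θ₃(π/2, e^{−1/(4σ²)})/(θ₃(π/2, e^{−1/(2σ²)}))² → 1/2`
(the lower Riesz constant of the Gaussian nod system) and
`σ√π·θ₃(0, e^{−1/(4σ²)})/(θ₃(0, e^{−1/(2σ²)}))² → 1` (the upper one). -/
theorem gauss_nod_riesz_limits :
    Tendsto (fun σ : ℝ =>
      σ * Real.sqrt π * theta3 (π / 2) (Real.exp (-1 / (4 * σ ^ 2))) /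
        (theta3 (π / 2) (Real.exp (-1 / (2 * σ ^ 2)))) ^ 2)
      atTop (nhds (1 / 2)) ∧
    Tendsto (fun σ : ℝ =>
      σ * Real.sqrt π * theta3 0 (Real.exp (-1 / (4 * σ ^ 2))) /
        (theta3 0 (Real.exp (-1 / (2 * σ ^ 2)))) ^ 2)
      atTop (nhds 1) := by
  have hπ := Real.pi_pos
  have htop : Tendsto (fun σ : ℝ => π ^ 2 * σ ^ 2) atTop atTop :=
    (tendsto_pow_atTop two_ne_zero).const_mul_atTop (by positivity)
  constructor
  · -- lower Riesz constant → 1/2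
    have hR : Tendsto (fun a : ℝ =>
        (E a - E (4 * a)) / (2 * (E (a / 2) - E (2 * a)) ^ 2)) atTop (nhds (1 / 2)) := by
      have hg4 : Tendsto (fun a : ℝ => Real.exp (4 * a) * E (4 * a)) atTop (nhds 1) :=
        tendsto_g.comp (tendsto_id.const_mul_atTop (by norm_num : (0:ℝ) < 4))
      have hg2 : Tendsto (fun a : ℝ => Real.exp (2 * a) * E (2 * a)) atTop (nhds 1) :=
        tendsto_g.comp (tendsto_id.const_mul_atTop (by norm_num : (0:ℝ) < 2))
      have hghalf : Tendsto (fun a : ℝ => Real.exp (a / 2) * E (a / 2)) atTop (nhds 1) :=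
        tendsto_g.comp (tendsto_id.atTop_div_const (by norm_num))
      have hN : Tendsto (fun a : ℝ =>
          Real.exp a * E a - Real.exp (-(3 * a)) * (Real.exp (4 * a) * E (4 * a)))
          atTop (nhds 1) := by
        have := tendsto_g.sub ((tendsto_exp_neg_mul 3 (by norm_num)).mul hg4)
        simpa using this
      have hD : Tendsto (fun a : ℝ =>
          2 * (Real.exp (a / 2) * E (a / 2)
            - Real.exp (-(3 * a / 2)) * (Real.exp (2 * a) * E (2 * a))) ^ 2)
          atTop (nhds 2) := by
        have hin : Tendsto (fun a : ℝ =>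
            Real.exp (a / 2) * E (a / 2)
              - Real.exp (-(3 * a / 2)) * (Real.exp (2 * a) * E (2 * a)))
            atTop (nhds 1) := by
          have h32 : Tendsto (fun a : ℝ => Real.exp (-(3 * a / 2))) atTop (nhds 0) := by
            have h := tendsto_exp_neg_mul (3 / 2) (by norm_num)
            refine h.congr fun a => ?_
            ring_nf
          have := hghalf.sub (h32.mul hg2)
          simpa using this
        have := (tendsto_const_nhds (x := (2:ℝ)) (f := atTop)).mul (hin.pow 2)
        simpa using this
      have hdiv := hN.div hD (by norm_num)
      refine hdiv.congr' ?_
      filter_upwards [eventually_gt_atTop 0] with a ha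
      simp only [Pi.div_apply]
      have hnum : Real.exp a * E a - Real.exp (-(3 * a)) * (Real.exp (4 * a) * E (4 * a))
          = Real.exp a * (E a - E (4 * a)) := by
        rw [mul_sub, ← mul_assoc, ← Real.exp_add, show -(3 * a) + 4 * a = a by ring]
      have hsq : Real.exp (a / 2) * Real.exp (a / 2) = Real.exp a := by
        rw [← Real.exp_add]
        congr 1
        ring
      have hden : 2 * (Real.exp (a / 2) * E (a / 2)
            - Real.exp (-(3 * a / 2)) * (Real.exp (2 * a) * E (2 * a))) ^ 2
          = Real.exp a * (2 * (E (a / 2) - E (2 * a)) ^ 2) := by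
        have h1 : Real.exp a * (2 * (E (a / 2) - E (2 * a)) ^ 2)
            = 2 * (Real.exp (a / 2) * (E (a / 2) - E (2 * a))) ^ 2 := by
          linear_combination (-2 * (E (a / 2) - E (2 * a)) ^ 2) * hsq
        rw [h1, mul_sub, ← mul_assoc, ← Real.exp_add, show -(3 * a / 2) + 2 * a = a / 2 by ring]
      rw [hnum, hden, mul_div_mul_left _ _ (Real.exp_ne_zero a)]
    have hcomp := hR.comp htop
    refine hcomp.congr' ?_
    filter_upwards [eventually_gt_atTop 0] with σ hσ
    have hσ2 : (0:ℝ) < σ ^ 2 := by positivity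
    have hc4 : (0:ℝ) < 1 / (4 * σ ^ 2) := by positivity
    have hc2 : (0:ℝ) < 1 / (2 * σ ^ 2) := by positivity
    have e4 : (-1 : ℝ) / (4 * σ ^ 2) = -(1 / (4 * σ ^ 2)) := by ring
    have e2 : (-1 : ℝ) / (2 * σ ^ 2) = -(1 / (2 * σ ^ 2)) := by ring
    rw [Function.comp_apply, e4, e2, theta3_pi_div_two hc4, theta3_pi_div_two hc2]
    have h41 : (4 : ℝ) * (1 / (4 * σ ^ 2)) = 1 / (1 * σ ^ 2) := by
      field_simp
    have h42 : (4 : ℝ) * (1 / (2 * σ ^ 2)) = 1 / ((1/2) * σ ^ 2) := by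
      rw [div_mul_eq_mul_div, mul_comm]
      field_simp
      ring
    rw [h41, h42, S_scaled hσ (by norm_num : (0:ℝ) < 1),
      S_scaled hσ (by norm_num : (0:ℝ) < 4),
      S_scaled hσ (by norm_num : (0:ℝ) < 1/2),
      S_scaled hσ (by norm_num : (0:ℝ) < 2)]
    rw [show (1:ℝ) * (π ^ 2 * σ ^ 2) = π ^ 2 * σ ^ 2 from one_mul _,
      show (1/2:ℝ) * (π ^ 2 * σ ^ 2) = (π ^ 2 * σ ^ 2) / 2 by ring]
    set a : ℝ := π ^ 2 * σ ^ 2 with ha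
    have hapos : 0 < a := by positivity
    rw [S_eq hapos, S_eq (by positivity : (0:ℝ) < 4 * a),
      S_eq (by positivity : (0:ℝ) < a / 2), S_eq (by positivity : (0:ℝ) < 2 * a)]
    have s1 : Real.sqrt (1 * π) = Real.sqrt π := by rw [one_mul]
    have s4 : Real.sqrt (4 * π) = 2 * Real.sqrt π := by
      rw [show (4:ℝ) * π = 2 ^ 2 * π by ring, Real.sqrt_mul (by positivity),
        Real.sqrt_sq (by norm_num : (0:ℝ) ≤ 2)]
    have shalf : Real.sqrt (1/2 * π) = Real.sqrt (2 * π) / 2 := by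
      rw [show (1/2 : ℝ) * π = (2 * π) / 4 by ring,
        Real.sqrt_div (by positivity : (0:ℝ) ≤ 2 * π),
        show (4:ℝ) = 2 ^ 2 by norm_num, Real.sqrt_sq (by norm_num : (0:ℝ) ≤ 2)]
    rw [s1, s4, shalf]
    exact alg1 hσ.ne' (Real.sq_sqrt hπ.le) (Real.sq_sqrt (by positivity))
  · -- upper Riesz constant → 1
    have hR : Tendsto (fun a : ℝ => S (4 * a) / (S (2 * a)) ^ 2) atTop (nhds 1) := by
      have hS4 : Tendsto (fun a : ℝ => S (4 * a)) atTop (nhds 1) :=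
        tendsto_S.comp (tendsto_id.const_mul_atTop (by norm_num : (0:ℝ) < 4))
      have hS2 : Tendsto (fun a : ℝ => S (2 * a)) atTop (nhds 1) :=
        tendsto_S.comp (tendsto_id.const_mul_atTop (by norm_num : (0:ℝ) < 2))
      have := hS4.div (hS2.pow 2) (by norm_num)
      rw [one_pow, div_one] at this
      exact this
    have hcomp := hR.comp htop
    refine hcomp.congr' ?_
    filter_upwards [eventually_gt_atTop 0] with σ hσ
    have e4 : (-1 : ℝ) / (4 * σ ^ 2) = -(1 / (4 * σ ^ 2)) := by ring
    have e2 : (-1 : ℝ) / (2 * σ ^ 2) = -(1 / (2 * σ ^ 2)) := by ring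
    rw [Function.comp_apply, e4, e2, theta3_zero, theta3_zero,
      S_scaled hσ (by norm_num : (0:ℝ) < 4), S_scaled hσ (by norm_num : (0:ℝ) < 2)]
    set a : ℝ := π ^ 2 * σ ^ 2 with ha
    have h4π : Real.sqrt π * Real.sqrt (4 * π) = 2 * π := by
      rw [← Real.sqrt_mul Real.pi_pos.le, show π * (4 * π) = (2 * π) ^ 2 by ring,
        Real.sqrt_sq (by positivity)]
    have h2π : Real.sqrt (2 * π) ^ 2 = 2 * π := Real.sq_sqrt (by positivity)
    have hnum : σ * Real.sqrt π * (σ * Real.sqrt (4 * π) * S (4 * a))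
        = σ ^ 2 * (2 * π) * S (4 * a) := by
      rw [← h4π]; ring
    have hden : (σ * Real.sqrt (2 * π) * S (2 * a)) ^ 2
        = σ ^ 2 * (2 * π) * (S (2 * a)) ^ 2 := by
      rw [mul_pow, mul_pow, h2π]
    rw [hnum, hden, mul_div_mul_left _ _
      (mul_pos (pow_pos hσ 2) (by positivity : (0:ℝ) < 2 * π)).ne']
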